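/- Let n ≥ 1 and let E : (Fin n → ℝ) → ℝ be twice continuously differentiable (ContDiff ℝ 2). Equip Fin n → ℝ with the coordinatewise order, so that meet and join are the coordinatewise min and max. Then E is submodular, i.e. E(x ⊓ y) + E(x ⊔ y) ≤ E(x) + E(y) for all x, y, if and only if all off-diagonal second partial derivatives of E are nonpositive, i.e. for every x ∈ Fin n → ℝ and all indices i ≠ j, the second derivative of E at x in the directions of the i-th and j-th standard basis vectors (e.g. fderiv ℝ (fun z => fderiv ℝ E z (Pi.single i 1)) x (Pi.single j 1)) is ≤ 0. -/

import Mathlib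

section Aux

variable {n : ℕ}

/-- Second derivative applied lemma. -/
lemma second_fderiv_apply (E : (Fin n → ℝ) → ℝ) (hE : ContDiff ℝ 2 E)
    (x u v : Fin n → ℝ) :
    fderiv ℝ (fun z => fderiv ℝ E z v) x u = fderiv ℝ (fderiv ℝ E) x u v := by
  have hΦ : ContDiff ℝ 1 (fderiv ℝ E) := hE.fderiv_right (by norm_num)
  have hd : DifferentiableAt ℝ (fderiv ℝ E) x :=
    (hΦ.differentiable one_ne_zero).differentiableAt
  have : fderiv ℝ (fun z => fderiv ℝ E z v) x
      = (fderiv ℝ (fderiv ℝ E) x).flip v := by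
    have := fderiv_clm_apply (c := fderiv ℝ E) (u := fun _ => v) hd
      (differentiableAt_const v)
    simpa using this
  rw [this]; rfl

/-- Bilinear expansion of a continuous bilinear form on `Fin n → ℝ`. -/
lemma bilin_expand (B : (Fin n → ℝ) →L[ℝ] (Fin n → ℝ) →L[ℝ] ℝ) (u v : Fin n → ℝ) :
    B u v = ∑ i : Fin n, ∑ j : Fin n,
      u i * v j * B (Pi.single i 1) (Pi.single j 1) := by
  have hu : (u : Fin n → ℝ) = ∑ i : Fin n, u i • (Pi.single i 1 : Fin n → ℝ) := by
    funext k
    simp [Finset.sum_apply, Pi.single_apply, Finset.sum_ite_eq', mul_comm]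
  have hv : (v : Fin n → ℝ) = ∑ j : Fin n, v j • (Pi.single j 1 : Fin n → ℝ) := by
    funext k
    simp [Finset.sum_apply, Pi.single_apply, Finset.sum_ite_eq', mul_comm]
  conv_lhs => rw [hu, hv]
  simp only [map_sum, map_smul, ContinuousLinearMap.sum_apply,
    ContinuousLinearMap.smul_apply, smul_eq_mul, Finset.mul_sum, Finset.sum_apply]
  rw [Finset.sum_comm]
  exact Finset.sum_congr rfl fun i _ => Finset.sum_congr rfl fun j _ => by ring

variable (E : (Fin n → ℝ) → ℝ)

/-- Core nonstrict inequality. -/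
lemma key_ineq (hE : ContDiff ℝ 2 E) (p u v : Fin n → ℝ)
    (h : ∀ t ∈ Set.Icc (0:ℝ) 1, ∀ s ∈ Set.Icc (0:ℝ) 1,
      fderiv ℝ (fderiv ℝ E) (p + t • u + s • v) u v ≤ 0) :
    E (p + u + v) + E p ≤ E (p + u) + E (p + v) := by
  have hΦ : ContDiff ℝ 1 (fderiv ℝ E) := hE.fderiv_right (by norm_num)
  have hΦd : Differentiable ℝ (fderiv ℝ E) := hΦ.differentiable one_ne_zero
  have hEd : Differentiable ℝ E := hE.differentiable (by norm_num)
  -- line derivative helper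
  have hline : ∀ (q w : Fin n → ℝ) (t : ℝ),
      HasDerivAt (fun t : ℝ => q + t • w) w t := by
    intro q w t
    simpa using ((hasDerivAt_id t).smul_const w).const_add q
  -- derivative of t ↦ fderiv E (q + t•w) v'
  have hH : ∀ (q w v' : Fin n → ℝ) (t : ℝ),
      HasDerivAt (fun t : ℝ => fderiv ℝ E (q + t • w) v')
        (fderiv ℝ (fderiv ℝ E) (q + t • w) w v') t := by
    intro q w v' t
    have h1 : HasDerivAt (fun t : ℝ => fderiv ℝ E (q + t • w))
        (fderiv ℝ (fderiv ℝ E) (q + t • w) w) t :=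
      (hΦd.differentiableAt.hasFDerivAt).comp_hasDerivAt t (hline q w t)
    simpa using h1.clm_apply (hasDerivAt_const t v')
  -- derivative of E along lines
  have hG : ∀ (q w : Fin n → ℝ) (t : ℝ),
      HasDerivAt (fun t : ℝ => E (q + t • w)) (fderiv ℝ E (q + t • w) w) t := by
    intro q w t
    exact (hEd.differentiableAt.hasFDerivAt).comp_hasDerivAt t (hline q w t)
  -- inner monotonicity : for s ∈ [0,1], fderiv E (p+u+s•v) v ≤ fderiv E (p+s•v) v
  have inner : ∀ s ∈ Set.Icc (0:ℝ) 1,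
      fderiv ℝ E (p + u + s • v) v ≤ fderiv ℝ E (p + s • v) v := by
    intro s hs
    have hha : AntitoneOn (fun t : ℝ => fderiv ℝ E (p + s • v + t • u) v)
        (Set.Icc 0 1) := by
      apply antitoneOn_of_deriv_nonpos (convex_Icc 0 1)
      · exact fun t _ => ((hH (p + s • v) u v t).continuousAt).continuousWithinAt
      · intro t ht
        exact ((hH (p + s • v) u v t).differentiableAt).differentiableWithinAt
      · intro t ht
        rw [interior_Icc] at ht
        rw [(hH (p + s • v) u v t).deriv]
        have := h t ⟨le_of_lt ht.1, le_of_lt ht.2⟩ s hs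
        have heq : p + s • v + t • u = p + t • u + s • v := by abel
        rw [heq]; exact this
    have := hha (Set.left_mem_Icc.2 zero_le_one) (Set.right_mem_Icc.2 zero_le_one)
      zero_le_one
    simpa [add_right_comm] using this
  -- outer monotonicity
  have outer : AntitoneOn (fun s : ℝ => E (p + u + s • v) - E (p + s • v))
      (Set.Icc 0 1) := by
    apply antitoneOn_of_deriv_nonpos (convex_Icc 0 1)
    · exact fun s _ => (((hG (p+u) v s).sub (hG p v s)).continuousAt).continuousWithinAt
    · intro s hs
      exact (((hG (p+u) v s).sub (hG p v s)).differentiableAt).differentiableWithinAt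
    · intro s hs
      rw [interior_Icc] at hs
      rw [(show HasDerivAt (fun s : ℝ => E (p + u + s • v) - E (p + s • v)) _ s from
        (hG (p+u) v s).sub (hG p v s)).deriv]
      have := inner s ⟨le_of_lt hs.1, le_of_lt hs.2⟩
      simp only [sub_nonpos]
      exact this
  have := outer (Set.left_mem_Icc.2 zero_le_one) (Set.right_mem_Icc.2 zero_le_one)
    zero_le_one
  simp only [one_smul, zero_smul, add_zero] at this
  linarith

/-- Core strict inequality, positive form. -/
lemma key_ineq_strict (hE : ContDiff ℝ 2 E) (p u v : Fin n → ℝ)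
    (h : ∀ t ∈ Set.Icc (0:ℝ) 1, ∀ s ∈ Set.Icc (0:ℝ) 1,
      0 < fderiv ℝ (fderiv ℝ E) (p + t • u + s • v) u v) :
    E (p + u) + E (p + v) < E (p + u + v) + E p := by
  have hΦ : ContDiff ℝ 1 (fderiv ℝ E) := hE.fderiv_right (by norm_num)
  have hΦd : Differentiable ℝ (fderiv ℝ E) := hΦ.differentiable one_ne_zero
  have hEd : Differentiable ℝ E := hE.differentiable (by norm_num)
  have hline : ∀ (q w : Fin n → ℝ) (t : ℝ),
      HasDerivAt (fun t : ℝ => q + t • w) w t := by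
    intro q w t
    simpa using ((hasDerivAt_id t).smul_const w).const_add q
  have hH : ∀ (q w v' : Fin n → ℝ) (t : ℝ),
      HasDerivAt (fun t : ℝ => fderiv ℝ E (q + t • w) v')
        (fderiv ℝ (fderiv ℝ E) (q + t • w) w v') t := by
    intro q w v' t
    have h1 : HasDerivAt (fun t : ℝ => fderiv ℝ E (q + t • w))
        (fderiv ℝ (fderiv ℝ E) (q + t • w) w) t :=
      (hΦd.differentiableAt.hasFDerivAt).comp_hasDerivAt t (hline q w t)
    simpa using h1.clm_apply (hasDerivAt_const t v')
  have hG : ∀ (q w : Fin n → ℝ) (t : ℝ),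
      HasDerivAt (fun t : ℝ => E (q + t • w)) (fderiv ℝ E (q + t • w) w) t := by
    intro q w t
    exact (hEd.differentiableAt.hasFDerivAt).comp_hasDerivAt t (hline q w t)
  have inner : ∀ s ∈ Set.Icc (0:ℝ) 1,
      fderiv ℝ E (p + s • v) v < fderiv ℝ E (p + u + s • v) v := by
    intro s hs
    have hha : StrictMonoOn (fun t : ℝ => fderiv ℝ E (p + s • v + t • u) v)
        (Set.Icc 0 1) := by
      apply strictMonoOn_of_deriv_pos (convex_Icc 0 1)
      · exact fun t _ => ((hH (p + s • v) u v t).continuousAt).continuousWithinAt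
      · intro t ht
        rw [interior_Icc] at ht
        rw [(hH (p + s • v) u v t).deriv]
        have := h t ⟨le_of_lt ht.1, le_of_lt ht.2⟩ s hs
        have heq : p + s • v + t • u = p + t • u + s • v := by abel
        rw [heq]; exact this
    have := hha (Set.left_mem_Icc.2 zero_le_one) (Set.right_mem_Icc.2 zero_le_one)
      zero_lt_one
    simpa [add_right_comm] using this
  have outer : StrictMonoOn (fun s : ℝ => E (p + u + s • v) - E (p + s • v))
      (Set.Icc 0 1) := by
    apply strictMonoOn_of_deriv_pos (convex_Icc 0 1)
    · exact fun s _ => (((hG (p+u) v s).sub (hG p v s)).continuousAt).continuousWithinAt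
    · intro s hs
      rw [interior_Icc] at hs
      rw [(show HasDerivAt (fun s : ℝ => E (p + u + s • v) - E (p + s • v)) _ s from
        (hG (p+u) v s).sub (hG p v s)).deriv]
      have := inner s ⟨le_of_lt hs.1, le_of_lt hs.2⟩
      simp only [sub_pos]
      exact this
  have := outer (Set.left_mem_Icc.2 zero_le_one) (Set.right_mem_Icc.2 zero_le_one)
    zero_lt_one
  simp only [one_smul, zero_smul, add_zero] at this
  linarith

end Aux

/-- A `C²` function `E : (Fin n → ℝ) → ℝ` is submodular for the
coordinatewise order iff all its off-diagonal second partial derivatives are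
nonpositive. -/
theorem submodular_iff_cross_derivatives_nonpos
    (n : ℕ) (hn : 1 ≤ n) (E : (Fin n → ℝ) → ℝ) (hE : ContDiff ℝ 2 E) :
    (∀ x y : Fin n → ℝ, E (x ⊓ y) + E (x ⊔ y) ≤ E x + E y) ↔
      (∀ x : Fin n → ℝ, ∀ i j : Fin n, i ≠ j →
        fderiv ℝ (fun z => fderiv ℝ E z (Pi.single i 1)) x (Pi.single j 1) ≤ 0) := by
  constructor
  · -- submodular → cross derivatives nonpos
    intro hsub x i j hij
    rw [second_fderiv_apply E hE]
    by_contra hpos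
    push_neg at hpos
    -- continuity of the cross derivative
    have hΦ : ContDiff ℝ 1 (fderiv ℝ E) := hE.fderiv_right (by norm_num)
    have hcont2 : Continuous (fderiv ℝ (fderiv ℝ E)) := hΦ.continuous_fderiv one_ne_zero
    have hcont : Continuous (fun z => fderiv ℝ (fderiv ℝ E) z
        (Pi.single j 1) (Pi.single i 1)) := by
      exact ((ContinuousLinearMap.apply ℝ ℝ (Pi.single i (1:ℝ))).continuous.comp
        (((ContinuousLinearMap.apply ℝ ((Fin n → ℝ) →L[ℝ] ℝ)
          (Pi.single j (1:ℝ))).continuous).comp hcont2))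
    have hopen : IsOpen {z : Fin n → ℝ |
        0 < fderiv ℝ (fderiv ℝ E) z (Pi.single j 1) (Pi.single i 1)} :=
      isOpen_lt continuous_const hcont
    obtain ⟨δ, hδ, hball⟩ := Metric.isOpen_iff.1 hopen x hpos
    set ε := δ / 3 with hε
    have hεpos : 0 < ε := by positivity
    -- apply the strict inequality
    have hstrict := key_ineq_strict E hE x (ε • (Pi.single j 1 : Fin n → ℝ)) (ε • (Pi.single i 1 : Fin n → ℝ)) ?_
    · -- contradiction with submodularity
      have hsub' := hsub (x + ε • (Pi.single i 1 : Fin n → ℝ)) (x + ε • (Pi.single j 1 : Fin n → ℝ))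
      have hmeet : (x + ε • (Pi.single i 1 : Fin n → ℝ)) ⊓ (x + ε • (Pi.single j 1 : Fin n → ℝ)) = x := by
        funext k
        rcases eq_or_ne k i with rfl | hki
        · simp only [Pi.inf_apply, Pi.add_apply, Pi.smul_apply, Pi.single_eq_same,
            Pi.single_eq_of_ne hij, smul_eq_mul, mul_one, mul_zero, add_zero]
          exact inf_eq_right.2 (by linarith)
        · rcases eq_or_ne k j with rfl | hkj
          · simp only [Pi.inf_apply, Pi.add_apply, Pi.smul_apply, Pi.single_eq_same,
              Pi.single_eq_of_ne hki, smul_eq_mul, mul_one, mul_zero, add_zero]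
            exact inf_eq_left.2 (by linarith)
          · simp only [Pi.inf_apply, Pi.add_apply, Pi.smul_apply,
              Pi.single_eq_of_ne hki, Pi.single_eq_of_ne hkj, smul_eq_mul,
              mul_zero, add_zero]
            exact inf_idem _
      have hjoin : (x + ε • (Pi.single i 1 : Fin n → ℝ)) ⊔ (x + ε • (Pi.single j 1 : Fin n → ℝ))
          = x + ε • (Pi.single j 1 : Fin n → ℝ) + ε • (Pi.single i 1 : Fin n → ℝ) := by
        funext k
        rcases eq_or_ne k i with rfl | hki
        · simp only [Pi.sup_apply, Pi.add_apply, Pi.smul_apply, Pi.single_eq_same,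
            Pi.single_eq_of_ne hij, smul_eq_mul, mul_one, mul_zero, add_zero]
          rw [sup_eq_left.2 (by linarith)]
        · rcases eq_or_ne k j with rfl | hkj
          · simp only [Pi.sup_apply, Pi.add_apply, Pi.smul_apply, Pi.single_eq_same,
              Pi.single_eq_of_ne hki, smul_eq_mul, mul_one, mul_zero, add_zero]
            rw [sup_eq_right.2 (by linarith)]
          · simp only [Pi.sup_apply, Pi.add_apply, Pi.smul_apply,
              Pi.single_eq_of_ne hki, Pi.single_eq_of_ne hkj, smul_eq_mul,
              mul_zero, add_zero]
            exact sup_idem _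
      rw [hmeet, hjoin] at hsub'
      linarith [hstrict]
    · -- positivity of second derivative on the box
      intro t ht s hs
      have hmem : x + t • (ε • (Pi.single j 1 : Fin n → ℝ)) + s • (ε • (Pi.single i 1 : Fin n → ℝ))
          ∈ Metric.ball x δ := by
        rw [Metric.mem_ball, dist_eq_norm]
        have heq : x + t • (ε • (Pi.single j 1 : Fin n → ℝ)) + s • (ε • (Pi.single i 1 : Fin n → ℝ)) - x
            = t • (ε • (Pi.single j 1 : Fin n → ℝ)) + s • (ε • (Pi.single i 1 : Fin n → ℝ)) := by abel
        rw [heq]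
        have h1 : ‖t • (ε • (Pi.single j 1 : Fin n → ℝ))‖ ≤ ε := by
          rw [norm_smul, norm_smul, Pi.norm_single]
          simp only [Real.norm_eq_abs, norm_one, mul_one]
          rw [abs_of_nonneg ht.1, abs_of_nonneg hεpos.le]
          nlinarith [ht.2]
        have h2 : ‖s • (ε • (Pi.single i 1 : Fin n → ℝ))‖ ≤ ε := by
          rw [norm_smul, norm_smul, Pi.norm_single]
          simp only [Real.norm_eq_abs, norm_one, mul_one]
          rw [abs_of_nonneg hs.1, abs_of_nonneg hεpos.le]
          nlinarith [hs.2]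
        calc ‖t • (ε • (Pi.single j 1 : Fin n → ℝ))
              + s • (ε • (Pi.single i 1 : Fin n → ℝ))‖ ≤ _ := norm_add_le _ _
          _ ≤ ε + ε := add_le_add h1 h2
          _ < δ := by rw [hε]; linarith
      have := hball hmem
      simp only [Set.mem_setOf_eq] at this
      simp only [map_smul, ContinuousLinearMap.smul_apply, smul_eq_mul]
      exact mul_pos hεpos (mul_pos hεpos this)
  · -- cross derivatives nonpos → submodular
    intro H x y
    set p := x ⊓ y with hp
    set u := x - p with hu
    set v := y - p with hv
    have hpu : p + u = x := by rw [hu]; abel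
    have hpv : p + v = y := by rw [hv]; abel
    have hpuv : p + u + v = x ⊔ y := by
      funext k
      have h1 : min (x k) (y k) + max (x k) (y k) = x k + y k := min_add_max _ _
      simp only [hu, hv, hp, Pi.add_apply, Pi.sub_apply, Pi.inf_apply, Pi.sup_apply]
      linarith
    have hun : ∀ k, 0 ≤ u k := by
      intro k
      simp only [hu, hp, Pi.sub_apply, Pi.inf_apply, sub_nonneg]
      exact min_le_left _ _
    have hvn : ∀ k, 0 ≤ v k := by
      intro k
      simp only [hv, hp, Pi.sub_apply, Pi.inf_apply, sub_nonneg]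
      exact min_le_right _ _
    have hdisj : ∀ k, u k = 0 ∨ v k = 0 := by
      intro k
      rcases le_total (x k) (y k) with hle | hle
      · left
        simp only [hu, hp, Pi.sub_apply, Pi.inf_apply, min_eq_left hle]
        ring
      · right
        simp only [hv, hp, Pi.sub_apply, Pi.inf_apply, min_eq_right hle]
        ring
    have key := key_ineq E hE p u v ?_
    · rw [hpuv, hpu, hpv] at key
      linarith
    · intro t ht s hs
      set z := p + t • u + s • v
      rw [bilin_expand]
      apply Finset.sum_nonpos
      intro i _
      apply Finset.sum_nonpos
      intro j _
      rcases eq_or_ne i j with rfl | hij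
      · rcases hdisj i with h0 | h0 <;> simp [h0]
      · have hB : fderiv ℝ (fderiv ℝ E) z (Pi.single i 1) (Pi.single j 1) ≤ 0 := by
          have := H z j i (Ne.symm hij)
          rwa [second_fderiv_apply E hE] at this
        have := mul_nonneg (hun i) (hvn j)
        nlinarith
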